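/- For all nonnegative integers k, l and writing χ_{α,β} = (x₂^{α+1}−x₂^{−(α+1)})(x₁^{β+1}−x₁^{−(β+1)})/((x₁−x₁^{−1})(x₂−x₂^{−1})) for the D₂ character, the identity χ_{k,k+l+1} − χ_{k+l+1,k} = Σ_{r=0}^{k} Σ_{s=0}^{l} (χ_{0,1} − χ_{1,0})·χ_{r+s,r+l−s} holds in ℤ[x₁^{±1},x₂^{±1}]. -/

import Mathlib

open Finset

/-- The character of the irreducible `D₂`-representation of highest weight `(α,β)`:
`χ_{α,β} = (x₂^{α+1}-x₂^{-(α+1)})(x₁^{β+1}-x₁^{-(β+1)}) / ((x₁-x₁⁻¹)(x₂-x₂⁻¹))`. -/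
noncomputable def chiD2 {F : Type*} [Field F] (x1 x2 : F) (α β : ℕ) : F :=
  (x2 ^ (α + 1) - x2⁻¹ ^ (α + 1)) * (x1 ^ (β + 1) - x1⁻¹ ^ (β + 1))
    / ((x1 - x1⁻¹) * (x2 - x2⁻¹))

/-- Integer-indexed version of `chiD2`. -/
noncomputable def psiD2 {F : Type*} [Field F] (x1 x2 : F) (a b : ℤ) : F :=
  (x2 ^ (a + 1) - x2⁻¹ ^ (a + 1)) * (x1 ^ (b + 1) - x1⁻¹ ^ (b + 1))
    / ((x1 - x1⁻¹) * (x2 - x2⁻¹))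

lemma chiD2_eq_psiD2 {F : Type*} [Field F] (x1 x2 : F) (α β : ℕ) :
    chiD2 x1 x2 α β = psiD2 x1 x2 α β := by
  unfold chiD2 psiD2
  rw [show ((α : ℤ) + 1) = ((α + 1 : ℕ) : ℤ) by push_cast; ring,
      show ((β : ℤ) + 1) = ((β + 1 : ℕ) : ℤ) by push_cast; ring,
      zpow_natCast, zpow_natCast, zpow_natCast, zpow_natCast]

lemma psiD2_left_neg_one {F : Type*} [Field F] (x1 x2 : F) (b : ℤ) :
    psiD2 x1 x2 (-1) b = 0 := by
  simp [psiD2]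

lemma psiD2_right_neg_one {F : Type*} [Field F] (x1 x2 : F) (a : ℤ) :
    psiD2 x1 x2 a (-1) = 0 := by
  simp [psiD2]

set_option maxHeartbeats 2000000 in
lemma key_poly {F : Type*} [Field F] (x1 x2 A B : F)
    (hx1 : x1 ≠ 0) (hx2 : x2 ≠ 0) (hA : A ≠ 0) (hB : B ≠ 0) :
    ((x2 - x2⁻¹) * (x1^2 - x1⁻¹^2) - (x2^2 - x2⁻¹^2) * (x1 - x1⁻¹))
        * ((A - A⁻¹) * (B - B⁻¹))
      = ((A - A⁻¹) * (B * x1 - B⁻¹ * x1⁻¹) + (A - A⁻¹) * (B * x1⁻¹ - B⁻¹ * x1)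
          - (A * x2 - A⁻¹ * x2⁻¹) * (B - B⁻¹) - (A * x2⁻¹ - A⁻¹ * x2) * (B - B⁻¹))
        * ((x1 - x1⁻¹) * (x2 - x2⁻¹)) := by
  have d1 : ∀ x : F, x ≠ 0 → x - x⁻¹ = (x^2 - 1)/x := by
    intro x hx; field_simp
  have d2 : ∀ x : F, x ≠ 0 → x^2 - x⁻¹^2 = (x^4 - 1)/x^2 := by
    intro x hx; field_simp
  have d3 : ∀ x y : F, x ≠ 0 → y ≠ 0 → x * y - x⁻¹ * y⁻¹ = (x^2*y^2 - 1)/(x*y) := by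
    intro x y hx hy; field_simp
  have d4 : ∀ x y : F, x ≠ 0 → y ≠ 0 → x * y⁻¹ - x⁻¹ * y = (x^2 - y^2)/(x*y) := by
    intro x y hx hy; field_simp
  rw [d1 x1 hx1, d1 x2 hx2, d1 A hA, d1 B hB, d2 x1 hx1, d2 x2 hx2,
      d3 B x1 hB hx1, d4 B x1 hB hx1, d3 A x2 hA hx2, d4 A x2 hA hx2]
  simp only [div_mul_div_comm]
  rw [div_sub_div _ _ (by simp [hx1, hx2]) (by simp [hx1, hx2]),
      ← add_div,
      div_sub_div _ _ (by simp [hA, hB, hx1]) (by simp [hA, hB, hx2]),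
      div_sub_div _ _ (by simp [hA, hB, hx1, hx2]) (by simp [hA, hB, hx2])]
  simp only [div_mul_div_comm]
  rw [div_eq_div_iff (by simp [hx1, hx2, hA, hB]) (by simp [hx1, hx2, hA, hB])]
  ring

set_option maxHeartbeats 2000000 in
lemma psi_key {F : Type*} [Field F] (x1 x2 : F)
    (hx1 : x1 ≠ 0) (hx2 : x2 ≠ 0)
    (h1 : x1 - x1⁻¹ ≠ 0) (h2 : x2 - x2⁻¹ ≠ 0) (a b : ℤ) :
    (psiD2 x1 x2 0 1 - psiD2 x1 x2 1 0) * psiD2 x1 x2 a b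
      = psiD2 x1 x2 a (b + 1) + psiD2 x1 x2 a (b - 1)
        - psiD2 x1 x2 (a + 1) b - psiD2 x1 x2 (a - 1) b := by
  have hA : x2 ^ (a + 1) ≠ 0 := zpow_ne_zero _ hx2
  have hB : x1 ^ (b + 1) ≠ 0 := zpow_ne_zero _ hx1
  have hD : ((x1 - x1⁻¹) * (x2 - x2⁻¹)) ≠ 0 := mul_ne_zero h1 h2
  unfold psiD2
  rw [div_sub_div_same, ← add_div, div_sub_div_same, div_sub_div_same,
    div_mul_div_comm, div_eq_div_iff (mul_ne_zero hD hD) hD]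
  simp only [inv_zpow']
  rw [show a + 1 + 1 = (a + 1) + 1 from rfl, show b + 1 + 1 = (b + 1) + 1 from rfl,
      show a - 1 + 1 = (a + 1) - 1 by ring, show b - 1 + 1 = (b + 1) - 1 by ring,
      show (-((a+1) + 1) : ℤ) = -(a+1) + -1 by ring,
      show (-((b+1) + 1) : ℤ) = -(b+1) + -1 by ring,
      show (-((a+1) - 1) : ℤ) = -(a+1) + 1 by ring,
      show (-((b+1) - 1) : ℤ) = -(b+1) + 1 by ring,
      zpow_sub₀ hx1, zpow_sub₀ hx2]
  simp only [zpow_add₀ hx1, zpow_add₀ hx2, zpow_neg, zpow_one]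
  generalize x2 ^ (a + 1) = A at hA ⊢
  generalize x1 ^ (b + 1) = B at hB ⊢
  norm_num
  linear_combination key_poly x1 x2 A B hx1 hx2 hA hB

/-- The character identity proving the `B₂ → D₂` branching rule:
`χ_{k,k+l+1} - χ_{k+l+1,k} = Σ_{r=0}^{k} Σ_{s=0}^{l} (χ_{0,1} - χ_{1,0})·χ_{r+s,r+l-s}`. -/
theorem b2_d2_character_identity {F : Type*} [Field F] (x1 x2 : F)
    (hx1 : x1 ≠ 0) (hx2 : x2 ≠ 0)
    (h1 : x1 - x1⁻¹ ≠ 0) (h2 : x2 - x2⁻¹ ≠ 0) (k l : ℕ) :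
    chiD2 x1 x2 k (k + l + 1) - chiD2 x1 x2 (k + l + 1) k
      = ∑ r ∈ range (k + 1), ∑ s ∈ range (l + 1),
          (chiD2 x1 x2 0 1 - chiD2 x1 x2 1 0) * chiD2 x1 x2 (r + s) (r + l - s) := by
  set ψ : ℤ → ℤ → F := psiD2 x1 x2 with hψ
  -- Φ t := ψ t (t+l+1) - ψ (t+l+1) t
  set Φ : ℤ → F := fun t => ψ t (t + l + 1) - ψ (t + l + 1) t with hΦ
  have inner : ∀ r : ℕ, ∑ s ∈ range (l + 1),
      (chiD2 x1 x2 0 1 - chiD2 x1 x2 1 0) * chiD2 x1 x2 (r + s) (r + l - s)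
      = Φ r - Φ ((r : ℤ) - 1) := by
    intro r
    have step : ∀ s ∈ range (l + 1),
        (chiD2 x1 x2 0 1 - chiD2 x1 x2 1 0) * chiD2 x1 x2 (r + s) (r + l - s)
        = ((fun s : ℕ => ψ ((r : ℤ) + s) ((r : ℤ) + l - s + 1)) s
            - (fun s : ℕ => ψ ((r : ℤ) + s) ((r : ℤ) + l - s + 1)) (s + 1))
          + ((fun s : ℕ => ψ ((r : ℤ) + s - 1) ((r : ℤ) + l - s)) (s + 1)
            - (fun s : ℕ => ψ ((r : ℤ) + s - 1) ((r : ℤ) + l - s)) s) := by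
      intro s hs
      have hsl : s ≤ l := Nat.lt_succ_iff.mp (mem_range.mp hs)
      simp only [chiD2_eq_psiD2, ← hψ]
      have hcast : ((r + l - s : ℕ) : ℤ) = (r : ℤ) + l - s := by
        have : s ≤ r + l := le_trans hsl (Nat.le_add_left _ _)
        push_cast [this]; ring
      rw [show ((0:ℕ):ℤ) = 0 from rfl, show ((1:ℕ):ℤ) = 1 from rfl,
          show (((r:ℕ) + s : ℕ) : ℤ) = (r : ℤ) + s by push_cast; ring, hcast]
      rw [psi_key x1 x2 hx1 hx2 h1 h2]
      push_cast
      simp only [hψ]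
      ring_nf
    rw [Finset.sum_congr rfl step, Finset.sum_add_distrib,
        Finset.sum_range_sub' (fun s : ℕ => ψ ((r : ℤ) + s) ((r : ℤ) + l - s + 1)),
        Finset.sum_range_sub (fun s : ℕ => ψ ((r : ℤ) + s - 1) ((r : ℤ) + l - s))]
    simp only [hΦ]
    push_cast
    ring_nf
  have outer := Finset.sum_range_sub (fun r : ℕ => Φ ((r : ℤ) - 1)) (k + 1)
  rw [Finset.sum_congr rfl (fun r _ => inner r)]
  have : ∀ r : ℕ, Φ (r : ℤ) - Φ ((r : ℤ) - 1)
      = (fun r : ℕ => Φ ((r : ℤ) - 1)) (r + 1) - (fun r : ℕ => Φ ((r : ℤ) - 1)) r := by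
    intro r; simp only []
    congr 1
    push_cast; ring_nf
  rw [Finset.sum_congr rfl (fun r _ => this r), outer]
  have hΦ0 : Φ ((0 : ℤ) - 1) = 0 := by
    simp only [hΦ, hψ]
    rw [show ((0:ℤ) - 1) = -1 by ring]
    rw [show (-1 + (l:ℤ) + 1) = (l : ℤ) by ring]
    rw [psiD2_left_neg_one, psiD2_right_neg_one]
    ring
  rw [show (((k+1 : ℕ) : ℤ) - 1) = (k : ℤ) by push_cast; ring]
  rw [show ((0:ℕ):ℤ) = 0 from rfl, hΦ0, sub_zero]
  simp only [hΦ, hψ, chiD2_eq_psiD2]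
  push_cast
  ring_nf
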